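/- If g : ZMod 2 → ℝ/ℤ satisfies g(0)=0, g(1)=a/m with m odd and 1 ≤ a ≤ m−1, and G = e∘g, then ‖G‖_{U^d}^{2^d} = (1 − 2^{−d}) + 2^{−d}·cos(2π a' / m) where a' = a·2^{d−1} mod m, and consequently ‖G‖_{U^d}^{2^d} ≤ 1 − 2^{−d}·Ω(1/m²). -/

import Mathlib

open Finset

/-- Additive directional derivative `D_h f(x) = f(x+h) - f(x)`. -/
noncomputable def D {V M : Type*} [Add V] [AddCommGroup M] (h : V) (f : V → M) : V → M :=
  fun x => f (x + h) - f x

/-- `f` is a nonclassical polynomial of degree at most `d`: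
all `(d+1)`-fold iterated derivatives vanish identically. -/
def IsNCPoly {V M : Type*} [Add V] [AddCommGroup M] (d : ℕ) (f : V → M) : Prop :=
  ∀ hs : List V, hs.length = d + 1 → hs.foldr D f = 0

/-- `e(t) = exp(2πit)` on the torus `ℝ/ℤ`. -/
noncomputable def e : AddCircle (1 : ℝ) → ℂ :=
  Function.Periodic.lift (f := fun t : ℝ => Complex.exp (2 * (Real.pi : ℂ) * Complex.I * (t : ℂ)))
    (by
      intro t
      dsimp only
      rw [Complex.ofReal_add, Complex.ofReal_one, mul_add, mul_one, Complex.exp_add,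
        Complex.exp_two_pi_mul_I, mul_one])

/-- The `2^d`-th power of the Gowers uniformity norm `‖F‖_{U^d}^{2^d}`,
as an expectation over `x` and directions `h₁,…,h_d`. -/
noncomputable def gowersPow {G : Type*} [AddCommGroup G] [Fintype G] (d : ℕ) (F : G → ℂ) : ℂ :=
  (∑ x : G, ∑ h : Fin d → G,
      ∏ S : Finset (Fin d), (starRingEnd ℂ)^[S.card] (F (x + ∑ i ∈ S, h i)))
    / ((Fintype.card G : ℂ) ^ (d + 1))

/-- For `g : ZMod 2 → ℝ/ℤ` with `g(0)=0`, `g(1)=a/m` (`m` odd), the `2^d`-th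
power of the Gowers norm of `e∘g` equals `(1-2^{-d}) + 2^{-d}cos(2πa'/m)`
with `a' = a·2^{d-1} mod m`, and hence is at most `1 - 2^{-d}·Ω(1/m²)`. -/

lemma conj_iter (k : ℕ) (w : ℂ) :
    (starRingEnd ℂ)^[k] w = if Even k then w else (starRingEnd ℂ) w := by
  induction k with
  | zero => simp
  | succ n ih =>
    rw [Function.iterate_succ_apply', ih]
    by_cases h : Even n <;> simp [h, Nat.even_add_one, Complex.conj_conj]

lemma card_even_filter (d : ℕ) (hd : 1 ≤ d) :
    ((univ : Finset (Finset (Fin d))).filter (fun S => Even S.card)).card = 2 ^ (d - 1) ∧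
    ((univ : Finset (Finset (Fin d))).filter (fun S => ¬ Even S.card)).card = 2 ^ (d - 1) := by
  classical
  set E := ((univ : Finset (Finset (Fin d))).filter (fun S => Even S.card)).card
  set O := ((univ : Finset (Finset (Fin d))).filter (fun S => ¬ Even S.card)).card
  have hsum : E + O = 2 ^ d := by
    rw [Finset.card_filter_add_card_filter_not]
    simp [Finset.card_univ, Fintype.card_finset]
  have hzero : (∑ S : Finset (Fin d), (-1 : ℤ) ^ S.card) = 0 := by
    rw [← Finset.powerset_univ]
    exact Finset.sum_powerset_neg_one_pow_card_of_nonempty (univ_nonempty_iff.mpr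
      ⟨⟨0, hd⟩⟩)
  have hsplit : (∑ S : Finset (Fin d), (-1 : ℤ) ^ S.card) = (E : ℤ) - O := by
    rw [← Finset.sum_filter_add_sum_filter_not univ (fun S => Even S.card)]
    have h1 : ∀ S ∈ (univ : Finset (Finset (Fin d))).filter (fun S => Even S.card),
        ((-1 : ℤ) ^ S.card) = 1 := by
      intro S hS; exact Even.neg_one_pow (mem_filter.mp hS).2
    have h2 : ∀ S ∈ (univ : Finset (Finset (Fin d))).filter (fun S => ¬ Even S.card),
        ((-1 : ℤ) ^ S.card) = -1 := by
      intro S hS; exact Odd.neg_one_pow (Nat.not_even_iff_odd.mp (mem_filter.mp hS).2)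
    rw [Finset.sum_congr rfl h1, Finset.sum_congr rfl h2]
    simp [E, O]
    ring
  have hEO : E = O := by omega
  have : 2 * 2 ^ (d - 1) = 2 ^ d := by
    rw [← pow_succ']
    congr 1
    omega
  omega

lemma prod_symm_one {d : ℕ} (F : ZMod 2 → ℂ) (hF : ∀ y, F y * (starRingEnd ℂ) (F y) = 1)
    (x : ZMod 2) (h : Fin d → ZMod 2) (j : Fin d) (hj : h j = 0) :
    ∏ S : Finset (Fin d), (starRingEnd ℂ)^[S.card] (F (x + ∑ i ∈ S, h i)) = 1 := by
  classical
  have key : ∀ (w : ℂ), w * (starRingEnd ℂ) w = 1 → ∀ k : ℕ,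
      (starRingEnd ℂ)^[k + 1] w * (starRingEnd ℂ)^[k] w = 1 := by
    intro w hw k
    rw [conj_iter, conj_iter]
    by_cases hk : Even k
    · simp [hk, Nat.even_add_one, mul_comm, hw]
    · simp [hk, Nat.even_add_one, hw]
  apply Finset.prod_ninvolution (g := fun S => if j ∈ S then S.erase j else insert j S)
  · intro S
    by_cases hjS : j ∈ S
    · simp only [hjS, if_pos]
      have hsum : ∑ i ∈ S.erase j, h i = ∑ i ∈ S, h i := Finset.sum_erase S hj
      have hcard : (S.erase j).card + 1 = S.card := Finset.card_erase_add_one hjS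
      rw [hsum, ← hcard]
      exact key _ (hF _) _
    · simp only [hjS, if_neg, not_false_iff]
      have hsum : ∑ i ∈ insert j S, h i = ∑ i ∈ S, h i := by
        rw [Finset.sum_insert hjS, hj, zero_add]
      have hcard : (insert j S).card = S.card + 1 := Finset.card_insert_of_notMem hjS
      rw [hsum, hcard, mul_comm]
      exact key _ (hF _) _
  · intro S _
    by_cases hjS : j ∈ S
    · simp [hjS, Finset.erase_eq_self]
    · simp [hjS, Finset.insert_eq_self]
  · intro S; exact mem_univ _
  · intro S
    by_cases hjS : j ∈ S
    · simp [hjS, Finset.notMem_erase, Finset.insert_erase]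
    · simp [hjS, Finset.mem_insert_self, Finset.erase_insert]

lemma sum_inner' {d : ℕ} (hd : 1 ≤ d) (F : ZMod 2 → ℂ)
    (hF : ∀ y, F y * (starRingEnd ℂ) (F y) = 1) (x : ZMod 2) :
    ∑ h : Fin d → ZMod 2, ∏ S : Finset (Fin d),
        (starRingEnd ℂ)^[S.card] (F (x + ∑ i ∈ S, h i))
      = ((2 : ℂ) ^ d - 1) +
        (F x) ^ (2 ^ (d - 1)) * ((starRingEnd ℂ) (F (x + 1))) ^ (2 ^ (d - 1)) := by
  classical
  rw [← Finset.sum_erase_add _ _ (Finset.mem_univ (fun _ : Fin d => (1 : ZMod 2)))]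
  congr 1
  · -- sum over h ≠ const 1
    have hone : ∀ h ∈ (univ : Finset (Fin d → ZMod 2)).erase (fun _ => 1),
        (∏ S : Finset (Fin d), (starRingEnd ℂ)^[S.card] (F (x + ∑ i ∈ S, h i))) = 1 := by
      intro h hh
      have hne : h ≠ fun _ => 1 := (Finset.mem_erase.mp hh).1
      have : ∃ j, h j = 0 := by
        by_contra hcon
        push_neg at hcon
        apply hne
        funext j
        have h01 : ∀ b : ZMod 2, b = 0 ∨ b = 1 := by decide
        rcases h01 (h j) with h0 | h1
        · exact absurd h0 (hcon j)
        · exact h1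
      obtain ⟨j, hj⟩ := this
      exact prod_symm_one F hF x h j hj
    rw [Finset.sum_congr rfl hone, Finset.sum_const,
      Finset.card_erase_of_mem (Finset.mem_univ _), Finset.card_univ]
    have hcard : Fintype.card (Fin d → ZMod 2) = 2 ^ d := by
      simp [Fintype.card_fun]
    rw [hcard]
    have h1 : 1 ≤ 2 ^ d := Nat.one_le_two_pow
    push_cast [Nat.cast_sub h1]
    simp
  · -- term at h = const 1
    have hsum : ∀ S : Finset (Fin d), (∑ _i ∈ S, (1 : ZMod 2)) = (S.card : ZMod 2) := by
      intro S; simp [Finset.sum_const]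
    have hterm : ∀ S : Finset (Fin d),
        (starRingEnd ℂ)^[S.card] (F (x + ∑ _i ∈ S, (1 : ZMod 2)))
          = if Even S.card then F x else (starRingEnd ℂ) (F (x + 1)) := by
      intro S
      rw [hsum S, conj_iter]
      by_cases hS : Even S.card
      · have h0 : (S.card : ZMod 2) = 0 :=
          (ZMod.natCast_eq_zero_iff _ _).mpr hS.two_dvd
        simp [hS, h0]
      · obtain ⟨q, hq⟩ := Nat.not_even_iff_odd.mp hS
        have h1 : (S.card : ZMod 2) = 1 := by
          rw [hq]
          push_cast
          have h2 : (2 : ZMod 2) = 0 := rfl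
          rw [h2]; ring
        simp [hS, h1]
    calc (∏ S : Finset (Fin d), (starRingEnd ℂ)^[S.card] (F (x + ∑ _i ∈ S, (1 : ZMod 2))))
        = ∏ S : Finset (Fin d),
            (if Even S.card then F x else (starRingEnd ℂ) (F (x + 1))) :=
          Finset.prod_congr rfl (fun S _ => hterm S)
      _ = (F x) ^ (2 ^ (d - 1)) * ((starRingEnd ℂ) (F (x + 1))) ^ (2 ^ (d - 1)) := by
          rw [Finset.prod_ite, Finset.prod_const, Finset.prod_const,
            (card_even_filter d hd).1, (card_even_filter d hd).2]

theorem stmt7 : ∃ c : ℝ, 0 < c ∧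
    ∀ (m a d : ℕ), Odd m → 3 ≤ m → 1 ≤ a → a ≤ m - 1 → 1 ≤ d →
    ∀ g : ZMod 2 → AddCircle (1 : ℝ),
      g 0 = 0 → g 1 = (((a : ℝ) / (m : ℝ)) : AddCircle (1 : ℝ)) →
      gowersPow d (fun x => e (g x)) =
        ((((1 - (2 : ℝ) ^ (-(d : ℤ))) +
          (2 : ℝ) ^ (-(d : ℤ)) * Real.cos (2 * Real.pi * ((a * 2 ^ (d - 1)) % m : ℕ) / m)) : ℝ) : ℂ) ∧
      (gowersPow d (fun x => e (g x))).re ≤ 1 - (2 : ℝ) ^ (-(d : ℤ)) * c / m ^ 2 := by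
  classical
  refine ⟨8, by norm_num, ?_⟩
  intro m a d hodd hm3 ha1 ham hd1 g hg0 hg1
  have hmn : 0 < m := by omega
  have hmR : (0 : ℝ) < m := by exact_mod_cast hmn
  set F : ZMod 2 → ℂ := fun x => e (g x) with hFdef
  set z : ℂ := Complex.exp (2 * (Real.pi : ℂ) * Complex.I * (((a : ℝ) / (m : ℝ) : ℝ) : ℂ))
    with hzdef
  have he : ∀ t : ℝ, e ((t : ℝ) : AddCircle (1 : ℝ))
      = Complex.exp (2 * (Real.pi : ℂ) * Complex.I * (t : ℂ)) :=
    fun t => Function.Periodic.lift_coe _ t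
  have hF0 : F 0 = 1 := by
    show e (g 0) = 1
    rw [hg0, show ((0 : AddCircle (1:ℝ))) = (((0:ℝ) : AddCircle (1:ℝ))) by norm_cast, he]
    simp
  have hF1 : F 1 = z := by
    show e (g 1) = z
    rw [hg1, he]
  have hzabs : ‖z‖ = 1 := by
    rw [hzdef, Complex.norm_exp]
    simp [Complex.mul_re]
  have hzconj : z * (starRingEnd ℂ) z = 1 := by
    rw [Complex.mul_conj, Complex.normSq_eq_norm_sq, hzabs]
    norm_num
  have hFabs : ∀ y : ZMod 2, F y * (starRingEnd ℂ) (F y) = 1 := by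
    have h01 : ∀ b : ZMod 2, b = 0 ∨ b = 1 := by decide
    intro y
    rcases h01 y with h | h
    · rw [h, hF0]; simp
    · rw [h, hF1]; exact hzconj
  set r : ℕ := (a * 2 ^ (d - 1)) % m with hrdef
  -- the total sum
  have h2sum : ∀ f : ZMod 2 → ℂ, ∑ x : ZMod 2, f x = f 0 + f 1 := fun f => Fin.sum_univ_two f
  have hsumx : (∑ x : ZMod 2, ∑ h : Fin d → ZMod 2, ∏ S : Finset (Fin d),
        (starRingEnd ℂ)^[S.card] (F (x + ∑ i ∈ S, h i)))
      = 2 * ((2 : ℂ) ^ d - 1) + (((starRingEnd ℂ) z) ^ (2 ^ (d - 1)) + z ^ (2 ^ (d - 1))) := by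
    rw [h2sum (fun x : ZMod 2 => ∑ h : Fin d → ZMod 2, ∏ S : Finset (Fin d),
        (starRingEnd ℂ)^[S.card] (F (x + ∑ i ∈ S, h i)))]
    simp only [sum_inner' hd1 F hFabs]
    rw [show ((1 + 1 : ZMod 2)) = 0 by decide, show ((0 + 1 : ZMod 2)) = 1 by decide]
    rw [hF0, hF1]
    simp only [map_one, one_pow]
    ring
  -- rewrite z ^ N as an exponential with real angle
  have hzN : z ^ (2 ^ (d - 1)) = Complex.exp
      (((2 * Real.pi * ((a * 2 ^ (d - 1) : ℕ) : ℝ) / m : ℝ) : ℂ) * Complex.I) := by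
    rw [hzdef, ← Complex.exp_nat_mul]
    congr 1
    push_cast
    ring
  have hre : (z ^ (2 ^ (d - 1))).re
      = Real.cos (2 * Real.pi * ((a * 2 ^ (d - 1) : ℕ) : ℝ) / m) := by
    rw [hzN, Complex.exp_ofReal_mul_I_re]
  have hconjz : ((starRingEnd ℂ) z) ^ (2 ^ (d - 1)) + z ^ (2 ^ (d - 1))
      = ((2 * Real.cos (2 * Real.pi * ((a * 2 ^ (d - 1) : ℕ) : ℝ) / m) : ℝ) : ℂ) := by
    rw [← map_pow, add_comm, Complex.add_conj, hre]
  -- reduce the angle mod 2π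
  have hcosred : Real.cos (2 * Real.pi * ((a * 2 ^ (d - 1) : ℕ) : ℝ) / m)
      = Real.cos (2 * Real.pi * (r : ℝ) / m) := by
    obtain ⟨q, hq⟩ : ∃ q : ℕ, a * 2 ^ (d - 1) = m * q + r :=
      ⟨a * 2 ^ (d - 1) / m, by rw [hrdef]; exact (Nat.div_add_mod _ m).symm⟩
    have hcast : ((a * 2 ^ (d - 1) : ℕ) : ℝ) = (m : ℝ) * (q : ℝ) + (r : ℝ) := by
      exact_mod_cast congrArg (Nat.cast : ℕ → ℝ) hq
    have hang : 2 * Real.pi * ((a * 2 ^ (d - 1) : ℕ) : ℝ) / m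
        = 2 * Real.pi * (r : ℝ) / m + ((q : ℤ) : ℝ) * (2 * Real.pi) := by
      rw [hcast]
      push_cast
      field_simp
      ring
    rw [hang, Real.cos_add_int_mul_two_pi]
  -- main equality
  have hcard : (Fintype.card (ZMod 2) : ℂ) = 2 := by rw [ZMod.card]; norm_num
  have heq : gowersPow d F =
      ((((1 - (2 : ℝ) ^ (-(d : ℤ))) +
        (2 : ℝ) ^ (-(d : ℤ)) * Real.cos (2 * Real.pi * ((a * 2 ^ (d - 1)) % m : ℕ) / m)) : ℝ) : ℂ) := by
    rw [gowersPow, hcard]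
    rw [hsumx, hconjz, hcosred]
    have h2d : ((2 : ℝ) ^ (-(d : ℤ))) = ((2 : ℝ) ^ d)⁻¹ := by
      rw [zpow_neg, zpow_natCast]
    rw [h2d, ← hrdef]
    rw [div_eq_iff (pow_ne_zero (d + 1) (two_ne_zero' ℂ))]
    push_cast
    have h2pow : ((2 : ℂ) ^ d) ≠ 0 := pow_ne_zero _ (two_ne_zero' ℂ)
    field_simp
    ring
  refine ⟨heq, ?_⟩
  rw [heq, Complex.ofReal_re]
  -- the inequality
  have hr1 : 1 ≤ r := by
    rcases Nat.eq_zero_or_pos r with h0 | h1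
    · exfalso
      have hdvd : m ∣ a * 2 ^ (d - 1) := Nat.dvd_of_mod_eq_zero h0
      have hcop : Nat.Coprime m (2 ^ (d - 1)) :=
        Nat.Coprime.pow_right _ (Nat.coprime_two_right.mpr hodd)
      have hma : m ∣ a := hcop.dvd_of_dvd_mul_right hdvd
      have := Nat.le_of_dvd (by omega) hma
      omega
    · exact h1
  have hr2 : r < m := Nat.mod_lt _ hmn
  set b : ℕ := min r (m - r) with hbdef
  have hb1 : 1 ≤ b := by omega
  have hb2 : 2 * b ≤ m := by omega
  have hcosb : Real.cos (2 * Real.pi * (r : ℝ) / m) = Real.cos (2 * Real.pi * (b : ℝ) / m) := by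
    rcases le_or_gt r (m - r) with h | h
    · rw [hbdef, min_eq_left h]
    · rw [hbdef, min_eq_right h.le]
      have hmr : ((m - r : ℕ) : ℝ) = (m : ℝ) - r := by
        push_cast [Nat.cast_sub hr2.le]
        ring
      have hang2 : 2 * Real.pi * ((m - r : ℕ) : ℝ) / m
          = 2 * Real.pi - 2 * Real.pi * (r : ℝ) / m := by
        rw [hmr]
        field_simp
      rw [hang2, Real.cos_two_pi_sub]
  have hbR : (1 : ℝ) ≤ b := by exact_mod_cast hb1
  have hb2R : 2 * (b : ℝ) ≤ m := by exact_mod_cast hb2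
  have hbound : Real.cos (2 * Real.pi * (b : ℝ) / m) ≤ 1 - 8 / (m : ℝ) ^ 2 := by
    have hx0 : (0 : ℝ) ≤ 2 * Real.pi * (b : ℝ) / m := by positivity
    have hxpi : 2 * Real.pi * (b : ℝ) / m ≤ Real.pi := by
      rw [div_le_iff₀ hmR]
      nlinarith [Real.pi_pos]
    have h1 := Real.cos_le_one_sub_mul_cos_sq (x := 2 * Real.pi * (b : ℝ) / m)
      (by rw [abs_of_nonneg hx0]; exact hxpi)
    have h2 : 2 / Real.pi ^ 2 * (2 * Real.pi * (b : ℝ) / m) ^ 2 = 8 * (b : ℝ) ^ 2 / m ^ 2 := by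
      have hpi : Real.pi ≠ 0 := Real.pi_ne_zero
      field_simp
      ring
    have hb2sq : (1 : ℝ) ≤ (b : ℝ) ^ 2 := by nlinarith [hbR]
    have h3 : 8 / (m : ℝ) ^ 2 ≤ 8 * (b : ℝ) ^ 2 / m ^ 2 := by gcongr; linarith
    linarith [h1, h2, h3]
  have ht : (0 : ℝ) < (2 : ℝ) ^ (-(d : ℤ)) := by positivity
  rw [hcosb]
  have hkey := mul_le_mul_of_nonneg_left hbound ht.le
  have hexp : (2 : ℝ) ^ (-(d : ℤ)) * (1 - 8 / (m : ℝ) ^ 2)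
      = (2 : ℝ) ^ (-(d : ℤ)) - (2 : ℝ) ^ (-(d : ℤ)) * 8 / m ^ 2 := by ring
  linarith [hkey, hexp]
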